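/- arXiv:math/0609482 — 4 statements merged into one kernel-verified Lean document; each statement's English description precedes it below -/
import Mathlib

section
/- The Lagrangian of the 3D pendulum is invariant under the symmetry action Φ_θ: for every θ ∈ ℝ, every R ∈ SO(3), and every Ω ∈ ℝ³, L(exp(θ S(e₃)) R, Ω) = L(R, Ω), where L(R, Ω) = ½ tr(S(Ω) J_d S(Ω)ᵀ) + m g e₃ᵀ R ρ. -/
open Matrix
open scoped Matrix Nat

section Aux

attribute [local instance] Matrix.linftyOpNormedRing Matrix.linftyOpNormedAlgebra

lemma exp_mulVec_fixed (M : Matrix (Fin 3) (Fin 3) ℝ) (v : Fin 3 → ℝ)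
    (h : M *ᵥ v = 0) : NormedSpace.exp M *ᵥ v = v := by
  have hsum : Summable fun n : ℕ => ((n ! : ℝ)⁻¹) • M ^ n :=
    NormedSpace.expSeries_summable' M
  let T : Matrix (Fin 3) (Fin 3) ℝ →ₗ[ℝ] (Fin 3 → ℝ) :=
    { toFun := fun A => A *ᵥ v
      map_add' := fun A B => Matrix.add_mulVec A B v
      map_smul' := fun c A => Matrix.smul_mulVec c A v }
  have hpow : ∀ n : ℕ, n ≠ 0 → M ^ n *ᵥ v = 0 := by
    intro n hn
    obtain ⟨k, rfl⟩ := Nat.exists_eq_succ_of_ne_zero hn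
    rw [pow_succ, ← Matrix.mulVec_mulVec, h, Matrix.mulVec_zero]
  calc NormedSpace.exp M *ᵥ v
      = T.toContinuousLinearMap (∑' n : ℕ, ((n ! : ℝ)⁻¹) • M ^ n) := by
        rw [NormedSpace.exp_eq_tsum ℝ]; rfl
    _ = ∑' n : ℕ, ((n ! : ℝ)⁻¹) • (M ^ n *ᵥ v) := by
        rw [T.toContinuousLinearMap.map_tsum hsum]
        simp [T, Matrix.smul_mulVec]
    _ = v := by
        rw [tsum_eq_single 0]
        · simp
        · intro n hn; simp [hpow n hn]

end Aux

/-- The hat map `S : ℝ³ → 𝔰𝔬(3)`, defined by `S(x) y = x × y`. -/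
def hat (x : Fin 3 → ℝ) : Matrix (Fin 3) (Fin 3) ℝ :=
  !![0, -x 2, x 1; x 2, 0, -x 0; -x 1, x 0, 0]

/-- The gravity direction `e₃ = (0,0,1)`. -/
def e3 : Fin 3 → ℝ := ![0, 0, 1]

/-- The nonstandard moment of inertia `J_d = ½ tr(J) I₃ − J`. -/
noncomputable def Jd (J : Matrix (Fin 3) (Fin 3) ℝ) : Matrix (Fin 3) (Fin 3) ℝ :=
  ((1 : ℝ) / 2 * J.trace) • (1 : Matrix (Fin 3) (Fin 3) ℝ) - J

/-- The Lagrangian of the 3D pendulum,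
`L(R, Ω) = ½ tr(S(Ω) J_d S(Ω)ᵀ) + m g e₃ᵀ R ρ`. -/
noncomputable def Lag (m g : ℝ) (ρ : Fin 3 → ℝ) (J : Matrix (Fin 3) (Fin 3) ℝ)
    (R : Matrix (Fin 3) (Fin 3) ℝ) (Ω : Fin 3 → ℝ) : ℝ :=
  (1 : ℝ) / 2 * (hat Ω * Jd J * (hat Ω)ᵀ).trace + m * g * (e3 ⬝ᵥ (R *ᵥ ρ))

/-- The Lagrangian of the 3D pendulum is invariant under the symmetry action
`Φ_θ (R) = exp (θ S(e₃)) R`: `L(exp (θ S(e₃)) R, Ω) = L(R, Ω)`. -/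
theorem lagrangian_invariant_under_symmetry (m g : ℝ) (ρ : Fin 3 → ℝ)
    (J : Matrix (Fin 3) (Fin 3) ℝ) (θ : ℝ) (R : Matrix (Fin 3) (Fin 3) ℝ)
    (hR : Rᵀ * R = 1) (hdet : R.det = 1) (Ω : Fin 3 → ℝ) :
    Lag m g ρ J (NormedSpace.exp (θ • hat e3) * R) Ω = Lag m g ρ J R Ω := by
  have hfix : (NormedSpace.exp (θ • hat e3))ᵀ *ᵥ e3 = e3 := by
    rw [← Matrix.exp_transpose]
    apply exp_mulVec_fixed
    rw [Matrix.transpose_smul, Matrix.smul_mulVec]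
    have : (hat e3)ᵀ *ᵥ e3 = 0 := by
      funext i; fin_cases i <;> simp [hat, e3, Matrix.mulVec, dotProduct,
        Fin.sum_univ_succ]
    rw [this, smul_zero]
  unfold Lag
  congr 1
  rw [← Matrix.mulVec_mulVec, Matrix.dotProduct_mulVec e3, ← Matrix.mulVec_transpose, hfix]
end

section
/- Variation of the discrete Legendre transform: for every F ∈ SO(3), every symmetric matrix J_d ∈ ℝ³ˣ³, and every ξ ∈ ℝ³, F S(ξ) J_d + J_d S(ξ) Fᵀ = S(( tr(F J_d) I₃ − F J_d ) F ξ). -/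
open Matrix
open scoped Matrix

/-- The Lee hat-map identity: for any `A` and `x`,
`S(x) A + Aᵀ S(x) = S((tr(A) I − A) x)`. -/
lemma hat_key (A : Matrix (Fin 3) (Fin 3) ℝ) (x : Fin 3 → ℝ) :
    hat x * A + Aᵀ * hat x =
      hat ((A.trace • (1 : Matrix (Fin 3) (Fin 3) ℝ) - A) *ᵥ x) := by
  ext i j
  fin_cases i <;> fin_cases j <;>
    simp [hat, Matrix.mul_apply, Matrix.vecMul, Matrix.mulVec, dotProduct,
      Fin.sum_univ_succ, Matrix.trace_fin_three, Matrix.one_apply] <;> ring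

/-- For `F ∈ SO(3)`, `F S(ξ) = S(Fξ) F`. -/
lemma hat_rot (F : Matrix (Fin 3) (Fin 3) ℝ)
    (hF : Fᵀ * F = 1) (hFdet : F.det = 1) (ξ : Fin 3 → ℝ) :
    F * hat ξ = hat (F *ᵥ ξ) * F := by
  have hadj : F.adjugate = Fᵀ := by
    have h1 : F * F.adjugate = 1 := by rw [Matrix.mul_adjugate, hFdet, one_smul]
    calc F.adjugate = 1 * F.adjugate := (one_mul _).symm
      _ = Fᵀ * (F * F.adjugate) := by rw [← hF, Matrix.mul_assoc]
      _ = Fᵀ := by rw [h1, mul_one]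
  rw [Matrix.adjugate_fin_three] at hadj
  have h00 := congrFun (congrFun hadj 0) 0
  have h01 := congrFun (congrFun hadj 1) 0
  have h02 := congrFun (congrFun hadj 2) 0
  have h10 := congrFun (congrFun hadj 0) 1
  have h11 := congrFun (congrFun hadj 1) 1
  have h12 := congrFun (congrFun hadj 2) 1
  have h20 := congrFun (congrFun hadj 0) 2
  have h21 := congrFun (congrFun hadj 1) 2
  have h22 := congrFun (congrFun hadj 2) 2
  simp [Matrix.transpose_apply] at h00 h01 h02 h10 h11 h12 h20 h21 h22
  ext i j
  fin_cases i <;> fin_cases j <;>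
    simp [hat, Matrix.mul_apply, Matrix.vecMul, Matrix.mulVec, dotProduct,
      Fin.sum_univ_succ]
  · linear_combination ξ 1 * h02 - ξ 2 * h01
  · linear_combination -(ξ 0) * h02 + ξ 2 * h00
  · linear_combination ξ 0 * h01 - ξ 1 * h00
  · linear_combination ξ 1 * h12 - ξ 2 * h11
  · linear_combination -(ξ 0) * h12 + ξ 2 * h10
  · linear_combination ξ 0 * h11 - ξ 1 * h10
  · linear_combination ξ 1 * h22 - ξ 2 * h21
  · linear_combination -(ξ 0) * h22 + ξ 2 * h20
  · linear_combination ξ 0 * h21 - ξ 1 * h20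

/-- Variation of the discrete Legendre transform: for every `F ∈ SO(3)`, every symmetric
`J_d ∈ ℝ³ˣ³`, and every `ξ ∈ ℝ³`,
`F S(ξ) J_d + J_d S(ξ) Fᵀ = S((tr(F J_d) I₃ − F J_d) F ξ)`. -/
theorem variation_of_discrete_legendre_transform (F : Matrix (Fin 3) (Fin 3) ℝ)
    (hF : Fᵀ * F = 1) (hFdet : F.det = 1)
    (Jd : Matrix (Fin 3) (Fin 3) ℝ) (hJd : Jdᵀ = Jd) (ξ : Fin 3 → ℝ) :
    F * hat ξ * Jd + Jd * hat ξ * Fᵀ =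
      hat (((F * Jd).trace • (1 : Matrix (Fin 3) (Fin 3) ℝ) - F * Jd) *ᵥ (F *ᵥ ξ)) := by
  have hrot := hat_rot F hF hFdet ξ
  have hskew : (hat ξ)ᵀ = -hat ξ := by
    ext i j; fin_cases i <;> fin_cases j <;> simp [hat]
  have hskew2 : (hat (F *ᵥ ξ))ᵀ = -hat (F *ᵥ ξ) := by
    ext i j; fin_cases i <;> fin_cases j <;> simp [hat]
  have h1 : F * hat ξ * Jd = hat (F *ᵥ ξ) * (F * Jd) := by
    rw [hrot, Matrix.mul_assoc]
  have h2 : Jd * hat ξ * Fᵀ = (F * Jd)ᵀ * hat (F *ᵥ ξ) := by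
    have e : Jd * hat ξ * Fᵀ = -((F * hat ξ * Jd)ᵀ) := by
      rw [Matrix.transpose_mul, Matrix.transpose_mul, hskew, hJd]
      noncomm_ring
    rw [e, h1, Matrix.transpose_mul, hskew2]
    noncomm_ring
  rw [h1, h2, ← hat_key (F * Jd) (F *ᵥ ξ)]
end

section
/- Conservation of the vertical angular momentum for the controlled continuous 3D pendulum: suppose R : ℝ → ℝ³ˣ³ and Π, Ω, u : ℝ → ℝ³ are differentiable, R(t) ∈ SO(3) for all t, and they satisfy Ṙ(t) = R(t) S(Ω(t)) and Π̇(t) = −Ω(t) × Π(t) + m g ρ × (R(t)ᵀ e₃) + (R(t)ᵀ e₃) × u(t) for all t. Then the function t ↦ e₃ᵀ (R(t) Π(t)) is constant. -/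
open Matrix
open scoped Matrix

attribute [local instance] Matrix.normedAddCommGroup Matrix.normedSpace

lemma hat_mulVec (x v : Fin 3 → ℝ) : hat x *ᵥ v = x ⨯₃ v := by
  ext i
  fin_cases i <;>
    simp [hat, crossProduct, Matrix.mulVec, dotProduct, Fin.sum_univ_three] <;> ring

lemma hasDerivAt_dot (R : ℝ → Matrix (Fin 3) (Fin 3) ℝ) (P : ℝ → Fin 3 → ℝ)
    (R' : Matrix (Fin 3) (Fin 3) ℝ) (P' : Fin 3 → ℝ) (t : ℝ)
    (hR : HasDerivAt R R' t) (hP : HasDerivAt P P' t) :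
    HasDerivAt (fun t => e3 ⬝ᵥ (R t *ᵥ P t)) (e3 ⬝ᵥ (R' *ᵥ P t) + e3 ⬝ᵥ (R t *ᵥ P')) t := by
  have hRe : ∀ i j, HasDerivAt (fun t => R t i j) (R' i j) t := fun i j =>
    ((Matrix.entryLinearMap ℝ ℝ i j).toContinuousLinearMap.hasFDerivAt.comp_hasDerivAt t hR)
  have hPe : ∀ j, HasDerivAt (fun t => P t j) (P' j) t := fun j =>
    ((ContinuousLinearMap.proj (R := ℝ) (φ := fun _ : Fin 3 => ℝ) j).hasFDerivAt.comp_hasDerivAt t hP)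
  have key : HasDerivAt (fun t => ∑ i, ∑ j, e3 i * (R t i j * P t j))
      (∑ i, ∑ j, e3 i * (R' i j * P t j + R t i j * P' j)) t := by
    refine HasDerivAt.fun_sum fun i _ => HasDerivAt.fun_sum fun j _ => ?_
    exact ((hRe i j).mul (hPe j)).const_mul (e3 i)
  convert key using 2 with t
  · simp only [dotProduct, Matrix.mulVec, Finset.mul_sum]
  · simp only [dotProduct, Matrix.mulVec, Pi.add_apply, Finset.mul_sum, mul_add,
      ← Finset.sum_add_distrib]

/-- Conservation of the vertical angular momentum for the controlled continuous 3D
pendulum: if `Ṙ = R S(Ω)` and `Π̇ = −Ω × Π + m g ρ × (Rᵀ e₃) + (Rᵀ e₃) × u`, with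
`R(t) ∈ SO(3)` for all `t`, then `t ↦ e₃ᵀ (R(t) Π(t))` is constant. -/
theorem vertical_angular_momentum_conserved (m g : ℝ) (ρ : Fin 3 → ℝ)
    (R : ℝ → Matrix (Fin 3) (Fin 3) ℝ) (P Ω u : ℝ → Fin 3 → ℝ)
    (hSO : ∀ t, (R t)ᵀ * R t = 1 ∧ (R t).det = 1)
    (hΩ : Differentiable ℝ Ω) (hu : Differentiable ℝ u)
    (hR : ∀ t, HasDerivAt R (R t * hat (Ω t)) t)
    (hP : ∀ t, HasDerivAt P
      (-(Ω t ⨯₃ P t) + (m * g) • (ρ ⨯₃ ((R t)ᵀ *ᵥ e3)) + ((R t)ᵀ *ᵥ e3) ⨯₃ u t) t) :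
    ∀ t s : ℝ, e3 ⬝ᵥ (R t *ᵥ P t) = e3 ⬝ᵥ (R s *ᵥ P s) := by
  have hderiv : ∀ t, HasDerivAt (fun t => e3 ⬝ᵥ (R t *ᵥ P t)) 0 t := by
    intro t
    have h := hasDerivAt_dot R P _ _ t (hR t) (hP t)
    convert h using 1
    rw [← Matrix.mulVec_mulVec, hat_mulVec, ← dotProduct_add, ← Matrix.mulVec_add]
    have hx : Ω t ⨯₃ P t +
        (-(Ω t ⨯₃ P t) + (m * g) • (ρ ⨯₃ ((R t)ᵀ *ᵥ e3)) + ((R t)ᵀ *ᵥ e3) ⨯₃ u t)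
        = (m * g) • (ρ ⨯₃ ((R t)ᵀ *ᵥ e3)) + ((R t)ᵀ *ᵥ e3) ⨯₃ u t := by abel
    rw [hx, Matrix.dotProduct_mulVec, ← Matrix.mulVec_transpose]
    rw [dotProduct_add, dotProduct_smul, dot_cross_self, dot_self_cross]
    simp
  exact fun t s =>
    is_const_of_deriv_eq_zero (fun x => (hderiv x).differentiableAt)
      (fun x => (hderiv x).deriv) t s
end

section
/- Discrete conservation of the vertical angular momentum by the Lie group variational integrator: let R_k ∈ SO(3), F_k ∈ SO(3), Π_k ∈ ℝ³, u_{k+1} ∈ ℝ³, h > 0, and define R_{k+1} = R_k F_k and Π_{k+1} = F_kᵀ Π_k + h m g ρ × (R_{k+1}ᵀ e₃) + h (R_{k+1}ᵀ e₃) × u_{k+1}. Then e₃ᵀ (R_{k+1} Π_{k+1}) = e₃ᵀ (R_k Π_k). -/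
open Matrix
open scoped Matrix

/-- Discrete conservation of the vertical angular momentum by the Lie group variational
integrator: with `R_{k+1} = R_k F_k` and
`Π_{k+1} = F_kᵀ Π_k + h m g ρ × (R_{k+1}ᵀ e₃) + h (R_{k+1}ᵀ e₃) × u_{k+1}`,
we have `e₃ᵀ (R_{k+1} Π_{k+1}) = e₃ᵀ (R_k Π_k)`. -/
theorem discrete_vertical_angular_momentum_conserved (m g h : ℝ) (hh : 0 < h)
    (ρ : Fin 3 → ℝ) (Rk Fk : Matrix (Fin 3) (Fin 3) ℝ)
    (hRk : Rkᵀ * Rk = 1) (hRkdet : Rk.det = 1)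
    (hFk : Fkᵀ * Fk = 1) (hFkdet : Fk.det = 1)
    (Pk u : Fin 3 → ℝ) :
    e3 ⬝ᵥ ((Rk * Fk) *ᵥ
      (Fkᵀ *ᵥ Pk + (h * m * g) • (ρ ⨯₃ ((Rk * Fk)ᵀ *ᵥ e3))
        + h • (((Rk * Fk)ᵀ *ᵥ e3) ⨯₃ u))) =
    e3 ⬝ᵥ (Rk *ᵥ Pk) := by
  have hFk' : Fk * Fkᵀ = 1 := mul_eq_one_comm.mp hFk
  have key : ∀ x : Fin 3 → ℝ,
      e3 ⬝ᵥ ((Rk * Fk) *ᵥ x) = ((Rk * Fk)ᵀ *ᵥ e3) ⬝ᵥ x := by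
    intro x
    rw [dotProduct_mulVec, ← mulVec_transpose]
  rw [mulVec_add, mulVec_add, dotProduct_add, dotProduct_add, mulVec_smul, mulVec_smul,
    dotProduct_smul, dotProduct_smul]
  simp only [key]
  rw [dot_cross_self, dot_self_cross, smul_zero, smul_zero, add_zero, add_zero,
    ← key, mulVec_mulVec, mul_assoc, hFk', mul_one]
end
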